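/- Let p be a prime, G a finite p-group, k = ZMod p, kG the group algebra with Jacobson radical J. For r ≥ 1 define F_r = {g ∈ G : (g : kG) - 1 ∈ J^r}. Then: (1) each F_r is a normal subgroup of G; (2) F_1 = G; (3) F_{r+1} ⊆ F_r for all r ≥ 1; (4) there exists N such that F_N is the trivial subgroup. -/

import Mathlib

set_option maxHeartbeats 1000000

open MonoidAlgebra

section Aux

variable (p : ℕ) [Fact p.Prime] (G : Type*) [Group G] [Fintype G]

/-- the augmentation map -/
noncomputable def auxEps : MonoidAlgebra (ZMod p) G →+* ZMod p :=
  ((MonoidAlgebra.lift (ZMod p) (ZMod p) G) (1 : G →* (ZMod p))).toRingHom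

theorem auxEps_single (a : G) (b : ZMod p) :
    auxEps p G (MonoidAlgebra.single a b) = b := by
  show ((MonoidAlgebra.lift (ZMod p) (ZMod p) G) (1 : G →* (ZMod p)))
      (MonoidAlgebra.single a b) = b
  rw [MonoidAlgebra.lift_single]
  simp

theorem aux_finite : Finite (MonoidAlgebra (ZMod p) G) := by
  classical
  have e : MonoidAlgebra (ZMod p) G ≃ (G → ZMod p) :=
    MonoidAlgebra.coeffEquiv.trans Finsupp.equivFunOnFinite
  exact Finite.of_equiv _ e.symm

/-- key p-group fact: every maximal left ideal contains `of g - 1` for every `g`. -/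
theorem aux_of_sub_one_mem_max (hG : IsPGroup p G)
    (M : Ideal (MonoidAlgebra (ZMod p) G)) (hM : M.IsMaximal) (g : G) :
    MonoidAlgebra.of (ZMod p) G g - 1 ∈ M := by
  classical
  haveI : Finite (MonoidAlgebra (ZMod p) G) := aux_finite p G
  set R := MonoidAlgebra (ZMod p) G with hRdef
  set V := R ⧸ M with hVdef
  letI : SMul G V := ⟨fun g v => (MonoidAlgebra.of (ZMod p) G g : R) • v⟩
  letI : MulAction G V :=
    { one_smul := fun v => by
        show (MonoidAlgebra.of (ZMod p) G 1 : R) • v = v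
        rw [map_one, one_smul]
      mul_smul := fun a b v => by
        show (MonoidAlgebra.of (ZMod p) G (a * b) : R) • v
            = (MonoidAlgebra.of (ZMod p) G a : R) • ((MonoidAlgebra.of (ZMod p) G b : R) • v)
        rw [map_mul, mul_smul] }
  haveI : Finite V := Quotient.finite _
  haveI : Nontrivial V :=
    Submodule.Quotient.nontrivial_iff.2 hM.ne_top
  -- p divides the cardinality of V
  have hpV : p ∣ Nat.card V := by
    obtain ⟨x, hx⟩ := exists_ne (0 : V)
    have hpR : ((p : ℕ) : R) = 0 := by
      have h1 : ((p : ℕ) : R) = algebraMap (ZMod p) R ((p : ℕ) : ZMod p) :=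
        (map_natCast (algebraMap (ZMod p) R) p).symm
      rw [h1, ZMod.natCast_self, map_zero]
    have hpx : p • x = 0 := by
      rw [← Nat.cast_smul_eq_nsmul R p x, hpR, zero_smul]
    have hdvd : addOrderOf x ∣ p := addOrderOf_dvd_of_nsmul_eq_zero hpx
    have hord : addOrderOf x = p := by
      rcases (Fact.out : p.Prime).eq_one_or_self_of_dvd _ hdvd with h | h
      · exact absurd (AddMonoid.addOrderOf_eq_one_iff.1 h) hx
      · exact h
    exact hord ▸ addOrderOf_dvd_natCard x
  -- there is a nonzero fixed point
  have h0fix : (0 : V) ∈ MulAction.fixedPoints G V := by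
    intro h
    show (MonoidAlgebra.of (ZMod p) G h : R) • (0 : V) = 0
    exact smul_zero _
  have hmod := hG.card_modEq_card_fixedPoints V
  have hdvdfix : p ∣ Nat.card (MulAction.fixedPoints G V) :=
    Nat.modEq_zero_iff_dvd.1 (hmod.symm.trans (Nat.modEq_zero_iff_dvd.2 hpV))
  haveI : Nonempty (MulAction.fixedPoints G V) := ⟨⟨0, h0fix⟩⟩
  have hpos : 0 < Nat.card (MulAction.fixedPoints G V) := Nat.card_pos
  haveI : Nontrivial (MulAction.fixedPoints G V) := by
    rw [← Finite.one_lt_card_iff_nontrivial]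
    exact lt_of_lt_of_le (Fact.out : p.Prime).one_lt (Nat.le_of_dvd hpos hdvdfix)
  obtain ⟨v, hvne⟩ := exists_ne (⟨0, h0fix⟩ : MulAction.fixedPoints G V)
  have hv0 : (v : V) ≠ 0 := fun h => hvne (Subtype.ext h)
  have hvfix : ∀ h : G, (MonoidAlgebra.of (ZMod p) G h : R) • (v : V) = (v : V) :=
    fun h => v.2 h
  -- the set of fixed points is an R-submodule
  let W : Submodule R V :=
    { carrier := {w : V | ∀ h : G, (MonoidAlgebra.of (ZMod p) G h : R) • w = w}
      zero_mem' := fun h => smul_zero _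
      add_mem' := fun ha hb h => by rw [smul_add, ha h, hb h]
      smul_mem' := by
        intro r w hw
        have key : ∀ r : R, ∀ h : G,
            ((MonoidAlgebra.of (ZMod p) G h : R) * r) • w = r • w := by
          intro r
          induction r using MonoidAlgebra.induction_on with
          | of x =>
            intro h
            rw [← map_mul, hw (h * x), hw x]
          | add f g hf hg =>
            intro h
            rw [mul_add, add_smul, add_smul, hf h, hg h]
          | smul c f hf =>
            intro h
            rw [Algebra.smul_def]
            rw [← mul_assoc, (Algebra.commutes c (MonoidAlgebra.of (ZMod p) G h : R)).symm]
            rw [mul_assoc, mul_smul ((algebraMap (ZMod p) R) c)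
              ((MonoidAlgebra.of (ZMod p) G h : R) * f) w, hf h, ← mul_smul]
        intro h
        show (MonoidAlgebra.of (ZMod p) G h : R) • (r • w) = r • w
        rw [← mul_smul]
        exact key r h }
  haveI : IsSimpleModule R V := (isSimpleModule_iff_isCoatom).2 (Ideal.isMaximal_def.1 hM)
  have hW : W = ⊤ := by
    rcases eq_bot_or_eq_top W with h | h
    · exfalso
      have hvW : (v : V) ∈ W := fun h => hvfix h
      rw [h] at hvW
      exact hv0 hvW
    · exact h
  have h1W : (Submodule.Quotient.mk (1 : R) : V) ∈ W := by rw [hW]; trivial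
  have h1g := h1W g
  have hmk : (Submodule.Quotient.mk (MonoidAlgebra.of (ZMod p) G g : R) : V)
      = Submodule.Quotient.mk (1 : R) := by
    have : (MonoidAlgebra.of (ZMod p) G g : R) • (1 : R) = MonoidAlgebra.of (ZMod p) G g := by
      rw [smul_eq_mul, mul_one]
    rw [← this, Submodule.Quotient.mk_smul]
    exact h1g
  exact (Submodule.Quotient.eq M).1 hmk

theorem aux_ker_le_max (hG : IsPGroup p G)
    (M : Ideal (MonoidAlgebra (ZMod p) G)) (hM : M.IsMaximal) :
    RingHom.ker (auxEps p G) ≤ M := by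
  intro z hz
  have key : ∀ z : MonoidAlgebra (ZMod p) G,
      z - MonoidAlgebra.single 1 (auxEps p G z) ∈ M := by
    intro z
    induction z using MonoidAlgebra.induction_on with
    | of g =>
      have h1 : auxEps p G (MonoidAlgebra.of (ZMod p) G g) = 1 := by
        rw [MonoidAlgebra.of_apply, auxEps_single]
      rw [h1, ← MonoidAlgebra.one_def]
      exact aux_of_sub_one_mem_max p G hG M hM g
    | add f g hf hg =>
      have hsa : MonoidAlgebra.single (1 : G) (auxEps p G f + auxEps p G g)
          = MonoidAlgebra.single (1 : G) (auxEps p G f)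
            + MonoidAlgebra.single (1 : G) (auxEps p G g) := MonoidAlgebra.single_add _ _ _
      rw [map_add, hsa, ← sub_add_sub_comm]
      exact M.add_mem hf hg
    | smul c f hf =>
      have h2 : auxEps p G (c • f) = c • auxEps p G f :=
        map_smul ((MonoidAlgebra.lift (ZMod p) (ZMod p) G) (1 : G →* (ZMod p))) c f
      have h3 : MonoidAlgebra.single (1 : G) (c • auxEps p G f)
          = c • MonoidAlgebra.single (1 : G) (auxEps p G f) := (MonoidAlgebra.smul_single _ _ _).symm
      rw [h2, h3, ← smul_sub]
      exact Submodule.smul_of_tower_mem M c hf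
  have hz0 : auxEps p G z = 0 := hz
  have hs0 : MonoidAlgebra.single (1 : G) (0 : ZMod p) = 0 := MonoidAlgebra.single_zero 1
  have h8 : z - MonoidAlgebra.single (1 : G) (auxEps p G z) = z := by
    rw [hz0, hs0, sub_zero]
  have h9 := key z
  rw [h8] at h9
  exact h9

theorem aux_ker_isMaximal : (RingHom.ker (auxEps p G)).IsMaximal := by
  rw [Ideal.isMaximal_def]
  constructor
  · intro h
    have h1 : (1 : MonoidAlgebra (ZMod p) G) ∈ RingHom.ker (auxEps p G) := by
      rw [h]; trivial
    rw [RingHom.mem_ker, map_one] at h1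
    exact one_ne_zero h1
  · intro N hN
    obtain ⟨z, hzN, hzk⟩ := SetLike.exists_of_lt hN
    rw [Ideal.eq_top_iff_one]
    have hc : auxEps p G z ≠ 0 := fun h => hzk (RingHom.mem_ker.2 h)
    have h1 : MonoidAlgebra.single (1 : G) (auxEps p G z) ∈ N := by
      have h2 : z - MonoidAlgebra.single 1 (auxEps p G z) ∈ RingHom.ker (auxEps p G) := by
        rw [RingHom.mem_ker, map_sub, auxEps_single, sub_self]
      have h3 := hN.le h2
      have h4 := N.sub_mem hzN h3
      simpa using h4
    have hmul : (MonoidAlgebra.single (1 : G) (auxEps p G z)⁻¹ : MonoidAlgebra (ZMod p) G)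
        * MonoidAlgebra.single 1 (auxEps p G z) = 1 := by
      rw [MonoidAlgebra.single_mul_single, one_mul, inv_mul_cancel₀ hc, MonoidAlgebra.one_def]
    exact hmul ▸ Ideal.mul_mem_left N _ h1

theorem aux_jac_eq (hG : IsPGroup p G) :
    (⊥ : Ideal (MonoidAlgebra (ZMod p) G)).jacobson = RingHom.ker (auxEps p G) := by
  apply le_antisymm
  · exact sInf_le ⟨bot_le, aux_ker_isMaximal p G⟩
  · exact le_sInf fun M hM => aux_ker_le_max p G hG M hM.2

end Aux

section AuxRing

variable {R' : Type*} [Ring R']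

theorem aux_pow_right_mem (K : Ideal R') (hK : ∀ x ∈ K, ∀ y, x * y ∈ K) :
    ∀ (r : ℕ), ∀ x ∈ K ^ r, ∀ y, x * y ∈ K ^ r := by
  intro r
  induction r with
  | zero =>
    intro x _ y
    rw [Submodule.pow_zero, Ideal.one_eq_top]
    exact Submodule.mem_top
  | succ n ih =>
    intro x hx y
    rw [Submodule.pow_succ] at hx ⊢
    refine Submodule.mul_induction_on hx (fun m hm k hk => ?_) (fun a b ha hb => ?_)
    · rw [mul_assoc]
      exact Submodule.mul_mem_mul hm (hK k hk y)
    · rw [add_mul]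
      exact add_mem ha hb

theorem aux_pow_succ' (K : Ideal R') (hK : ∀ x ∈ K, ∀ y, x * y ∈ K) :
    ∀ n : ℕ, K ^ (n + 1) = K * K ^ n
  | 0 => by
    rw [Submodule.pow_one, Submodule.pow_zero, Ideal.one_eq_top]
    apply le_antisymm
    · intro x hx
      have hx1 : x * 1 ∈ K * ⊤ := Ideal.mul_mem_mul hx Submodule.mem_top
      rwa [mul_one] at hx1
    · exact Ideal.mul_le.2 fun a ha b _ => hK a ha b
  | n + 1 => by
    rw [Submodule.pow_succ (n := n + 1)]
    conv_lhs => rw [aux_pow_succ' K hK n]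
    rw [Ideal.mul_assoc, ← Submodule.pow_succ]

theorem aux_left_inv {a : R'} (ha : a ∈ (⊥ : Ideal R').jacobson) :
    ∃ u, u * (1 - a) = 1 := by
  have hspan : Ideal.span {1 - a} = ⊤ := by
    by_contra h
    obtain ⟨M, hMmax, hle⟩ := Ideal.exists_le_maximal _ h
    have h1 : (1 - a) ∈ M := hle (Ideal.subset_span rfl)
    have h2 : a ∈ M := (sInf_le ⟨bot_le, hMmax⟩ : (⊥ : Ideal R').jacobson ≤ M) ha
    have h3 : (1 : R') ∈ M := by
      have := M.add_mem h1 h2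
      rwa [sub_add_cancel] at this
    exact hMmax.ne_top ((Ideal.eq_top_iff_one M).2 h3)
  have h1 : (1 : R') ∈ Ideal.span {1 - a} := by rw [hspan]; trivial
  obtain ⟨u, hu⟩ := Submodule.mem_span_singleton.1 h1
  exact ⟨u, by rwa [smul_eq_mul] at hu⟩

theorem aux_nakayama (Jac : Ideal R')
    (hright : ∀ x ∈ Jac, ∀ y, x * y ∈ Jac)
    (hinv : ∀ a ∈ Jac, ∃ u, u * (1 - a) = 1) :
    ∀ (n : ℕ) (s : Finset R') (N : Ideal R'),
      s.card ≤ n → N = Submodule.span R' ↑s → N ≤ Jac * N → N = ⊥ := by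
  classical
  intro n
  induction n with
  | zero =>
    intro s N hcard hspan _
    have hs : s = ∅ := Finset.card_eq_zero.1 (Nat.le_zero.1 hcard)
    rw [hspan, hs, Finset.coe_empty, Submodule.span_empty]
  | succ n ih =>
    intro s N hcard hspan hle
    rcases Finset.eq_empty_or_nonempty s with hs | ⟨x, hx⟩
    · rw [hspan, hs, Finset.coe_empty, Submodule.span_empty]
    · set t := s.erase x with ht
      have hst : (s : Set R') = insert x ↑t := by
        rw [ht, Finset.coe_erase, Set.insert_diff_singleton,
          Set.insert_eq_self.2 (by exact_mod_cast hx)]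
      have hsplit : N = Submodule.span R' {x} ⊔ Submodule.span R' (↑t : Set R') := by
        rw [hspan, hst, Submodule.span_insert]
      have hxmem : x ∈ Jac * N := hle (hspan ▸ Submodule.subset_span (by exact_mod_cast hx))
      rw [hsplit, Submodule.mul_sup] at hxmem
      obtain ⟨u, hu, v, hv, huv⟩ := Submodule.mem_sup.1 hxmem
      have hu' : ∃ a ∈ Jac, a * x = u := by
        have hT : Jac * Submodule.span R' {x} ≤
            { carrier := {z | ∃ a ∈ Jac, a * x = z}
              zero_mem' := ⟨0, Jac.zero_mem, zero_mul x⟩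
              add_mem' := by
                rintro z₁ z₂ ⟨a, ha, hae⟩ ⟨b, hb, hbe⟩
                exact ⟨a + b, Jac.add_mem ha hb, by rw [add_mul, hae, hbe]⟩
              smul_mem' := by
                rintro c z ⟨a, ha, hae⟩
                exact ⟨c * a, Ideal.mul_mem_left _ c ha, by
                  rw [smul_eq_mul, ← hae, mul_assoc]⟩ } := by
          refine Submodule.mul_le.2 fun m hm n hn => ?_
          obtain ⟨c, hc⟩ := Submodule.mem_span_singleton.1 hn
          exact ⟨m * c, hright m hm c, by rw [mul_assoc, ← hc, smul_eq_mul]⟩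
        exact hT hu
      obtain ⟨a, haJ, hax⟩ := hu'
      have hvt : v ∈ Submodule.span R' (↑t : Set R') := by
        have hmle : Jac * Submodule.span R' (↑t : Set R') ≤ Submodule.span R' (↑t : Set R') :=
          Submodule.mul_le.2 fun m _ n hn =>
            Submodule.smul_mem (Submodule.span R' (↑t : Set R')) m hn
        exact hmle hv
      have hxv : (1 - a) * x = v := by
        rw [sub_mul, one_mul, hax]
        have : v = x - u := eq_sub_of_add_eq' huv
        rw [this]
      obtain ⟨w, hw⟩ := hinv a haJ
      have hxspan : x ∈ Submodule.span R' (↑t : Set R') := by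
        have hx2 : x = w * v := by rw [← hxv, ← mul_assoc, hw, one_mul]
        rw [hx2]
        exact Submodule.smul_mem _ w hvt
      have hNt : N = Submodule.span R' (↑t : Set R') := by
        rw [hsplit]
        refine sup_eq_right.2 ?_
        rw [Submodule.span_le, Set.singleton_subset_iff]
        exact hxspan
      have hcard' : t.card ≤ n := by
        have h7 : t.card = s.card - 1 := by rw [ht]; exact Finset.card_erase_of_mem hx
        omega
      exact ih t N hcard' hNt hle

theorem aux_nilpotent [Finite R'] (Jac : Ideal R')
    (hright : ∀ x ∈ Jac, ∀ y, x * y ∈ Jac)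
    (hinv : ∀ a ∈ Jac, ∃ u, u * (1 - a) = 1) :
    ∃ n : ℕ, 1 ≤ n ∧ Jac ^ n = ⊥ := by
  classical
  haveI : Finite (Ideal R') :=
    Finite.of_injective (fun I : Ideal R' => (I : Set R')) SetLike.coe_injective
  obtain ⟨m, n', hmn, heq⟩ := Finite.exists_ne_map_eq_of_infinite (fun n : ℕ => Jac ^ n)
  have key : ∀ m n' : ℕ, m < n' → Jac ^ m = Jac ^ n' → Jac ^ m = ⊥ := by
    intro m n' hlt heq
    have hstab : Jac ^ m = Jac ^ (m + 1) := by
      apply le_antisymm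
      · calc Jac ^ m = Jac ^ n' := heq
          _ ≤ Jac ^ (m + 1) := Ideal.pow_le_pow_right hlt
      · exact Ideal.pow_le_pow_right (Nat.le_succ m)
    have hle : Jac ^ m ≤ Jac * Jac ^ m := by
      rw [← aux_pow_succ' Jac hright]
      exact hstab.le
    have hfin : (↑(Jac ^ m) : Set R').Finite := Set.toFinite _
    refine aux_nakayama Jac hright hinv hfin.toFinset.card hfin.toFinset (Jac ^ m)
      le_rfl ?_ hle
    rw [Set.Finite.coe_toFinset]
    exact (Submodule.span_eq _).symm
  rcases Nat.lt_or_ge m n' with h | h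
  · have hbot := key m n' h heq
    refine ⟨m + 1, Nat.le_add_left 1 m, ?_⟩
    have : Jac ^ (m + 1) ≤ Jac ^ m := Ideal.pow_le_pow_right (Nat.le_succ m)
    rw [hbot] at this
    exact le_bot_iff.1 this
  · have hlt : n' < m := lt_of_le_of_ne h (fun hh => hmn hh.symm)
    have hbot := key n' m hlt heq.symm
    refine ⟨n' + 1, Nat.le_add_left 1 n', ?_⟩
    have : Jac ^ (n' + 1) ≤ Jac ^ n' := Ideal.pow_le_pow_right (Nat.le_succ n')
    rw [hbot] at this
    exact le_bot_iff.1 this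

end AuxRing

/-- the dimension subgroups `F_r = {g : G | g - 1 ∈ J^r}` of a finite
`p`-group form a descending series of normal subgroups starting at `G` and eventually
reaching the trivial subgroup. -/
theorem dimension_subgroups_form_normal_series
    (p : ℕ) (hp : p.Prime) (G : Type*) [Group G] [Fintype G] (hG : IsPGroup p G)
    (J : Ideal (MonoidAlgebra (ZMod p) G))
    (hJ : J = (⊥ : Ideal (MonoidAlgebra (ZMod p) G)).jacobson)
    (F : ℕ → Set G)
    (hF : ∀ r, F r = {x : G | MonoidAlgebra.of (ZMod p) G x - 1 ∈ J ^ r}) :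
    -- (1) each F_r (r ≥ 1) is a normal subgroup of G
    (∀ r : ℕ, 1 ≤ r → ∃ H : Subgroup G, H.Normal ∧ (H : Set G) = F r) ∧
    -- (2) F_1 = G
    (F 1 = Set.univ) ∧
    -- (3) F_{r+1} ⊆ F_r for every r ≥ 1
    (∀ r : ℕ, 1 ≤ r → F (r + 1) ⊆ F r) ∧
    -- (4) some F_N is trivial
    (∃ N : ℕ, 1 ≤ N ∧ F N = {(1 : G)}) := by
  haveI := Fact.mk hp
  have hJk : J = RingHom.ker (auxEps p G) := by rw [hJ, aux_jac_eq p G hG]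
  have hright : ∀ x ∈ J, ∀ y, x * y ∈ J := by
    intro x hx y
    rw [hJk, RingHom.mem_ker] at hx ⊢
    rw [map_mul, hx, zero_mul]
  have hrightpow : ∀ r : ℕ, ∀ x ∈ J ^ r, ∀ y, x * y ∈ J ^ r :=
    aux_pow_right_mem J hright
  have hofmem : ∀ g : G, MonoidAlgebra.of (ZMod p) G g - 1 ∈ J := by
    intro g
    rw [hJk, RingHom.mem_ker, map_sub, map_one, MonoidAlgebra.of_apply, auxEps_single,
      sub_self]
  refine ⟨?_, ?_, ?_, ?_⟩
  · -- (1) normal subgroups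
    intro r _
    refine ⟨{ carrier := {x : G | MonoidAlgebra.of (ZMod p) G x - 1 ∈ J ^ r}
              one_mem' := by
                show MonoidAlgebra.of (ZMod p) G 1 - 1 ∈ J ^ r
                rw [map_one, sub_self]
                exact zero_mem _
              mul_mem' := by
                intro a b ha hb
                show MonoidAlgebra.of (ZMod p) G (a * b) - 1 ∈ J ^ r
                have hab : MonoidAlgebra.of (ZMod p) G (a * b) - 1
                    = (MonoidAlgebra.of (ZMod p) G a - 1) * (MonoidAlgebra.of (ZMod p) G b - 1)
                      + ((MonoidAlgebra.of (ZMod p) G a - 1)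
                        + (MonoidAlgebra.of (ZMod p) G b - 1)) := by
                  rw [map_mul]
                  noncomm_ring
                rw [hab]
                exact add_mem (Ideal.mul_mem_left _ _ hb) (add_mem ha hb)
              inv_mem' := by
                intro a ha
                show MonoidAlgebra.of (ZMod p) G a⁻¹ - 1 ∈ J ^ r
                have hinv : MonoidAlgebra.of (ZMod p) G a⁻¹ - 1
                    = -(MonoidAlgebra.of (ZMod p) G a⁻¹
                        * (MonoidAlgebra.of (ZMod p) G a - 1)) := by
                  rw [mul_sub, mul_one, ← map_mul, inv_mul_cancel, map_one]
                  noncomm_ring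
                rw [hinv]
                exact neg_mem (Ideal.mul_mem_left _ _ ha) }, ?_, ?_⟩
    · constructor
      intro x hx g
      show MonoidAlgebra.of (ZMod p) G (g * x * g⁻¹) - 1 ∈ J ^ r
      have hconj : MonoidAlgebra.of (ZMod p) G (g * x * g⁻¹) - 1
          = MonoidAlgebra.of (ZMod p) G g
            * ((MonoidAlgebra.of (ZMod p) G x - 1) * MonoidAlgebra.of (ZMod p) G g⁻¹) := by
        have h1 : (MonoidAlgebra.of (ZMod p) G g)
            * ((MonoidAlgebra.of (ZMod p) G x - 1) * MonoidAlgebra.of (ZMod p) G g⁻¹)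
            = MonoidAlgebra.of (ZMod p) G g * MonoidAlgebra.of (ZMod p) G x
                * MonoidAlgebra.of (ZMod p) G g⁻¹
              - MonoidAlgebra.of (ZMod p) G g * MonoidAlgebra.of (ZMod p) G g⁻¹ := by
          noncomm_ring
        rw [h1, ← map_mul, ← map_mul, ← map_mul, mul_inv_cancel, map_one]
      rw [hconj]
      exact Ideal.mul_mem_left _ _ (hrightpow r _ hx _)
    · rw [hF]
      rfl
  · -- (2) F 1 = univ
    rw [hF]
    apply Set.eq_univ_iff_forall.2
    intro x
    show MonoidAlgebra.of (ZMod p) G x - 1 ∈ J ^ 1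
    rw [Submodule.pow_one]
    exact hofmem x
  · -- (3) descending
    intro r _
    rw [hF, hF]
    intro x hx
    exact Ideal.pow_le_pow_right (Nat.le_succ r) hx
  · -- (4) eventually trivial
    haveI : Finite (MonoidAlgebra (ZMod p) G) := aux_finite p G
    have hinv : ∀ a ∈ J, ∃ u, u * (1 - a) = 1 := by
      intro a ha
      exact aux_left_inv (hJ ▸ ha)
    obtain ⟨n, hn1, hn⟩ := aux_nilpotent J hright hinv
    refine ⟨n, hn1, ?_⟩
    rw [hF]
    ext x
    simp only [Set.mem_setOf_eq, Set.mem_singleton_iff]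
    constructor
    · intro hx
      rw [hn] at hx
      have h0 : MonoidAlgebra.of (ZMod p) G x - 1 = 0 := hx
      have h1 : MonoidAlgebra.of (ZMod p) G x = MonoidAlgebra.of (ZMod p) G 1 := by
        rw [map_one, ← sub_eq_zero]
        exact h0
      exact MonoidAlgebra.of_injective h1
    · intro hx
      rw [hx, map_one, sub_self]
      exact zero_mem _
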